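/- The minor of the Bernstein–Vandermonde matrix A formed by rows i, i+1, ..., i+j-1 and the first j columns (columns 1 through j) equals C(n,0)·C(n,1)···C(n,j-1) · Π_{l=i}^{i+j-1}(1-x_l)^{n-j+1} · Π_{i ≤ k < l ≤ i+j-1}(x_l - x_k). -/

import Mathlib

open Finset Matrix

lemma bernstein_det_aux (m : ℕ) (t : Fin m → ℝ) :
    (Matrix.of fun r c : Fin m => (1 - t r) ^ (m - 1 - (c : ℕ)) * t r ^ (c : ℕ)).det
      = ∏ r : Fin m, ∏ s ∈ Finset.Ioi r, (t s - t r) := by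
  set U : Matrix (Fin m) (Fin m) ℝ := Matrix.of fun k c =>
    if (c : ℕ) ≤ k then (-1 : ℝ) ^ ((k : ℕ) - c) * ((m - 1 - (c : ℕ)).choose ((k : ℕ) - c)) else 0
    with hU
  have hmul : (Matrix.of fun r c : Fin m => (1 - t r) ^ (m - 1 - (c : ℕ)) * t r ^ (c : ℕ))
      = Matrix.vandermonde t * U := by
    ext r c
    rw [Matrix.mul_apply]
    simp only [hU, Matrix.vandermonde_apply, Matrix.of_apply]
    rw [Fin.sum_univ_eq_sum_range (fun k => t r ^ k *
      (if (c : ℕ) ≤ k then (-1 : ℝ) ^ (k - (c : ℕ)) * ((m - 1 - (c : ℕ)).choose (k - (c : ℕ))) else 0)) m]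
    rw [show Finset.range m = Finset.Ico 0 m by rw [Finset.range_eq_Ico]]
    rw [← Finset.sum_Ico_consecutive _ (Nat.zero_le (c : ℕ)) (le_of_lt c.isLt)]
    have h1 : ∑ k ∈ Finset.Ico 0 (c : ℕ), t r ^ k *
        (if (c : ℕ) ≤ k then (-1 : ℝ) ^ (k - (c : ℕ)) * ((m - 1 - (c : ℕ)).choose (k - (c : ℕ))) else 0) = 0 := by
      apply Finset.sum_eq_zero
      intro k hk
      rw [Finset.mem_Ico] at hk
      rw [if_neg (by omega), mul_zero]
    rw [h1, zero_add, Finset.sum_Ico_eq_sum_range]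
    have h2 : ∀ s ∈ Finset.range (m - (c : ℕ)), t r ^ ((c : ℕ) + s) *
        (if (c : ℕ) ≤ (c : ℕ) + s then (-1 : ℝ) ^ ((c : ℕ) + s - (c : ℕ)) *
          ((m - 1 - (c : ℕ)).choose ((c : ℕ) + s - (c : ℕ))) else 0)
        = t r ^ (c : ℕ) * ((-(t r)) ^ s * (1 : ℝ) ^ (m - 1 - (c : ℕ) - s) *
            ((m - 1 - (c : ℕ)).choose s)) := by
      intro s _
      rw [if_pos (Nat.le_add_right _ _), Nat.add_sub_cancel_left, pow_add, one_pow, neg_pow]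
      ring
    rw [Finset.sum_congr rfl h2, ← Finset.mul_sum,
      show m - (c : ℕ) = (m - 1 - (c : ℕ)) + 1 by omega, ← add_pow]
    ring_nf
  have hdetU : U.det = 1 := by
    rw [Matrix.det_of_lowerTriangular U (by
      intro a b hab
      simp only [hU, Matrix.of_apply]
      rw [if_neg (by exact Nat.not_le.mpr hab)])]
    apply Finset.prod_eq_one
    intro c _
    simp [hU]
  rw [hmul, Matrix.det_mul, hdetU, mul_one, Matrix.det_vandermonde]

/-- Minor of the Bernstein–Vandermonde matrix with rows i,...,i+j-1 and the first
j columns (1-based indexing of the nodes x). -/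
theorem bernstein_vandermonde_minor_rows_initial_cols (n i j : ℕ) (x : ℕ → ℝ)
    (hi : 1 ≤ i) (hij : i + j ≤ n + 2) :
    (Matrix.of fun r c : Fin j =>
        (n.choose c : ℝ) * (1 - x (i + r)) ^ (n - (c : ℕ)) * x (i + r) ^ (c : ℕ)).det =
      (∏ k ∈ Finset.range j, (n.choose k : ℝ)) *
        (∏ r : Fin j, (1 - x (i + r)) ^ (n + 1 - j)) *
        ∏ r : Fin j, ∏ s ∈ Finset.Ioi r, (x (i + (s : ℕ)) - x (i + (r : ℕ))) := by
  have hjn : j ≤ n + 1 := by omega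
  have hM : (Matrix.of fun r c : Fin j =>
        (n.choose c : ℝ) * (1 - x (i + r)) ^ (n - (c : ℕ)) * x (i + r) ^ (c : ℕ))
      = Matrix.of fun r c : Fin j => (n.choose c : ℝ) *
          (Matrix.of (fun r c : Fin j => (1 - x (i + r)) ^ (n + 1 - j) *
            (Matrix.of (fun r c : Fin j =>
              (1 - x (i + r)) ^ (j - 1 - (c : ℕ)) * x (i + r) ^ (c : ℕ)) r c)) r c) := by
    ext r c
    simp only [Matrix.of_apply]
    rw [show n - (c : ℕ) = (n + 1 - j) + (j - 1 - (c : ℕ)) by have := c.isLt; omega, pow_add]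
    ring
  rw [hM, Matrix.det_mul_row, Matrix.det_mul_column, bernstein_det_aux j (fun r => x (i + r)),
    Fin.prod_univ_eq_prod_range (fun k => (n.choose k : ℝ)) j, mul_assoc]
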